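/- Let f : ℕ^k → ℕ satisfy f(0) = 0, f weakly increasing, f = L + P with L linear and P periodic, and f(x + λ_k e_k) = f(x) + m for all x (where m = λ_k b_k is a positive integer). For 0 ≤ j ≤ m−1 define f_j(x) = ⌊(f(x) + j)/m⌋. Then f = Σ_{j=0}^{m−1} f_j, and each f_j satisfies f_j(x + λ_k e_k) = f_j(x) + 1 for all x ∈ ℕ^k (i.e., each f_j is meager in the last coordinate). -/

import Mathlib

lemma sum_range_add_div (m : ℕ) (hm : 0 < m) : ∀ n : ℕ,
    ∑ j ∈ Finset.range m, (n + j) / m = n := by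
  intro n
  induction n with
  | zero =>
    refine Finset.sum_eq_zero fun j hj => ?_
    simp only [Finset.mem_range] at hj
    simpa using Nat.div_eq_of_lt hj
  | succ n ih =>
    have h1 := Finset.sum_range_succ' (fun j => (n + j) / m) m
    have h2 := Finset.sum_range_succ (fun j => (n + j) / m) m
    have h3 : (n + m) / m = n / m + 1 := Nat.add_div_right n hm
    have h4 : ∀ j, n + 1 + j = n + (j + 1) := fun j => by omega
    calc ∑ j ∈ Finset.range m, (n + 1 + j) / m
        = ∑ j ∈ Finset.range m, (n + (j + 1)) / m := by
          exact Finset.sum_congr rfl fun j _ => by rw [h4]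
      _ = n + 1 := by
          simp only [Nat.add_zero] at h1
          omega

/-- Lemma 4.2 (reduction to the meager case): if `f` is ZILP and
`f(x + λₖeₖ) = f(x) + m` with `m = λₖbₖ` a positive integer, then setting
`f_j(x) = ⌊(f(x)+j)/m⌋`, we have `f = ∑_{j<m} f_j` and each `f_j` is meager in the
last coordinate: `f_j(x + λₖeₖ) = f_j(x) + 1`. -/
theorem reduction_to_meager (d : ℕ) (f : (Fin d → ℕ) → ℕ → ℕ)
    (h0 : f 0 0 = 0)
    (hmono : ∀ y y' z z', y ≤ y' → z ≤ z' → f y z ≤ f y' z')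
    (lamk : ℕ) (hlamk : 0 < lamk)
    -- f = L + P with L linear (last coefficient bₖ) and P periodic
    (b : Fin d → ℚ) (bk : ℚ) (P : (Fin d → ℕ) → ℕ → ℚ)
    (hdec : ∀ y z, (f y z : ℚ) = ∑ i, b i * (y i : ℚ) + bk * z + P y z)
    (lam : Fin d → ℕ) (hlam : ∀ i, 0 < lam i)
    (hPy : ∀ (i : Fin d) y z, P (Function.update y i (y i + lam i)) z = P y z)
    (hPz : ∀ y z, P y (z + lamk) = P y z)
    (m : ℕ) (hm : 0 < m) (hmbk : (m : ℚ) = lamk * bk)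
    (hstep : ∀ y z, f y (z + lamk) = f y z + m) :
    (∀ y z, f y z = ∑ j ∈ Finset.range m, (f y z + j) / m) ∧
    (∀ j y z, (f y (z + lamk) + j) / m = (f y z + j) / m + 1) := by
  constructor
  · intro y z
    exact (sum_range_add_div m hm (f y z)).symm
  · intro j y z
    rw [hstep]
    have : f y z + m + j = f y z + j + m := by omega
    rw [this, Nat.add_div_right _ hm]
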